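/- Let 0 < q < 1, b > 0, and f, g : [0,b] → ℝ with m ≤ f ≤ M and φ ≤ g ≤ Φ on [0,b]. Then |(1/b)·I_q(fg;0,b) − (1/b²)·I_q(f;0,b)·I_q(g;0,b)| ≤ (1/4)(M−m)(Φ−φ). -/

import Mathlib

open scoped BigOperators
open Set

set_option maxHeartbeats 1000000 in
private lemma gruss_aux (q : ℝ) (hq0 : 0 < q) (hq1 : q < 1)
    (F G : ℕ → ℝ) (m M φ Φ : ℝ)
    (hF : ∀ n, m ≤ F n ∧ F n ≤ M) (hG : ∀ n, φ ≤ G n ∧ G n ≤ Φ) :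
    |(1 - q) * (∑' n : ℕ, F n * G n * q ^ n) -
        ((1 - q) * ∑' n : ℕ, F n * q ^ n) * ((1 - q) * ∑' n : ℕ, G n * q ^ n)| ≤
      (1 / 4) * (M - m) * (Φ - φ) := by
  have hp : 0 < 1 - q := by linarith
  have hqn : ∀ n : ℕ, (0:ℝ) ≤ q ^ n := fun n => pow_nonneg hq0.le n
  have hsq : Summable (fun n : ℕ => q ^ n) := summable_geometric_of_lt_one hq0.le hq1
  have htq : ∑' n : ℕ, q ^ n = (1 - q)⁻¹ := tsum_geometric_of_lt_one hq0.le hq1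
  have hmM : m ≤ M := le_trans (hF 0).1 (hF 0).2
  have hφΦ : φ ≤ Φ := le_trans (hG 0).1 (hG 0).2
  -- uniform bounds
  set Kf : ℝ := max |m| |M| with hKfdef
  set Kg : ℝ := max |φ| |Φ| with hKgdef
  have hKf : ∀ n, |F n| ≤ Kf := by
    intro n
    have h1 : -|m| ≤ m := neg_abs_le m
    have h2 : M ≤ |M| := le_abs_self M
    have h3 : |m| ≤ Kf := le_max_left _ _
    have h4 : |M| ≤ Kf := le_max_right _ _
    rw [abs_le]
    exact ⟨by linarith [(hF n).1], by linarith [(hF n).2]⟩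
  have hKg : ∀ n, |G n| ≤ Kg := by
    intro n
    have h1 : -|φ| ≤ φ := neg_abs_le φ
    have h2 : Φ ≤ |Φ| := le_abs_self Φ
    have h3 : |φ| ≤ Kg := le_max_left _ _
    have h4 : |Φ| ≤ Kg := le_max_right _ _
    rw [abs_le]
    exact ⟨by linarith [(hG n).1], by linarith [(hG n).2]⟩
  have hKf0 : 0 ≤ Kf := le_trans (abs_nonneg _) (hKf 0)
  have hKg0 : 0 ≤ Kg := le_trans (abs_nonneg _) (hKg 0)
  -- summability helper
  have key : ∀ (v : ℕ → ℝ) (C : ℝ), (∀ n, |v n| ≤ C * q ^ n) → Summable v := by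
    intro v C h
    exact Summable.of_norm_bounded (hsq.mul_left C)
      (fun n => by simpa [Real.norm_eq_abs] using h n)
  have sF : Summable (fun n : ℕ => F n * q ^ n) := by
    refine key _ Kf fun n => ?_
    rw [abs_mul, abs_of_nonneg (hqn n)]
    exact mul_le_mul_of_nonneg_right (hKf n) (hqn n)
  have sG : Summable (fun n : ℕ => G n * q ^ n) := by
    refine key _ Kg fun n => ?_
    rw [abs_mul, abs_of_nonneg (hqn n)]
    exact mul_le_mul_of_nonneg_right (hKg n) (hqn n)
  have sFG : Summable (fun n : ℕ => F n * G n * q ^ n) := by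
    refine key _ (Kf * Kg) fun n => ?_
    rw [abs_mul, abs_mul, abs_of_nonneg (hqn n)]
    exact mul_le_mul_of_nonneg_right
      (mul_le_mul (hKf n) (hKg n) (abs_nonneg _) hKf0) (hqn n)
  set A : ℝ := ∑' n : ℕ, F n * G n * q ^ n with hA
  set B : ℝ := ∑' n : ℕ, F n * q ^ n with hB
  set Cs : ℝ := ∑' n : ℕ, G n * q ^ n with hCs
  set EG : ℝ := (1 - q) * Cs with hEG
  set c : ℝ := (M + m) / 2 with hc
  -- EG is between φ and Φ
  have hEGub : EG ≤ Φ := by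
    have h1 : Cs ≤ ∑' n : ℕ, Φ * q ^ n :=
      Summable.tsum_le_tsum (fun n => mul_le_mul_of_nonneg_right (hG n).2 (hqn n)) sG (hsq.mul_left Φ)
    rw [tsum_mul_left, htq] at h1
    rw [hEG]
    calc (1 - q) * Cs ≤ (1 - q) * (Φ * (1 - q)⁻¹) := mul_le_mul_of_nonneg_left h1 hp.le
      _ = Φ := by field_simp
  have hEGlb : φ ≤ EG := by
    have h1 : ∑' n : ℕ, φ * q ^ n ≤ Cs :=
      Summable.tsum_le_tsum (fun n => mul_le_mul_of_nonneg_right (hG n).1 (hqn n)) (hsq.mul_left φ) sG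
    rw [tsum_mul_left, htq] at h1
    rw [hEG]
    calc φ = (1 - q) * (φ * (1 - q)⁻¹) := by field_simp
      _ ≤ (1 - q) * Cs := mul_le_mul_of_nonneg_left h1 hp.le
  -- covariance identity
  have sCov : Summable (fun n : ℕ => (1 - q) * q ^ n * (F n - c) * (G n - EG)) := by
    refine key _ ((1 - q) * (Kf + |c|) * (Kg + |EG|)) fun n => ?_
    have h1 : |F n - c| ≤ Kf + |c| := (abs_sub _ _).trans (add_le_add (hKf n) le_rfl)
    have h2 : |G n - EG| ≤ Kg + |EG| := (abs_sub _ _).trans (add_le_add (hKg n) le_rfl)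
    have e : |(1 - q) * q ^ n * (F n - c) * (G n - EG)|
        = (1 - q) * q ^ n * |F n - c| * |G n - EG| := by
      rw [abs_mul, abs_mul, abs_mul, abs_of_nonneg hp.le, abs_of_nonneg (hqn n)]
    rw [e]
    have hq' : 0 ≤ (1 - q) * q ^ n := mul_nonneg hp.le (hqn n)
    calc (1 - q) * q ^ n * |F n - c| * |G n - EG|
        ≤ (1 - q) * q ^ n * (Kf + |c|) * (Kg + |EG|) := by
          apply mul_le_mul (mul_le_mul_of_nonneg_left h1 hq') h2 (abs_nonneg _)
          positivity
      _ = (1 - q) * (Kf + |c|) * (Kg + |EG|) * q ^ n := by ring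
  have s1 := sFG.mul_left (1 - q)
  have s2 := sF.mul_left ((1 - q) * EG)
  have s3 := sG.mul_left ((1 - q) * c)
  have s4 := hsq.mul_left ((1 - q) * c * EG)
  have hCov : (∑' n : ℕ, (1 - q) * q ^ n * (F n - c) * (G n - EG))
      = (1 - q) * A - ((1 - q) * B) * EG := by
    have e : (fun n : ℕ => (1 - q) * q ^ n * (F n - c) * (G n - EG))
        = fun n : ℕ => ((1 - q) * (F n * G n * q ^ n) - (1 - q) * EG * (F n * q ^ n)
            - (1 - q) * c * (G n * q ^ n)) + (1 - q) * c * EG * q ^ n :=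
      funext fun n => by ring
    rw [e, Summable.tsum_add ((s1.sub s2).sub s3) s4, Summable.tsum_sub (s1.sub s2) s3, Summable.tsum_sub s1 s2,
      tsum_mul_left, tsum_mul_left, tsum_mul_left, tsum_mul_left, htq, hEG]
    field_simp
    ring
  -- bound |F n - c|
  have hFc : ∀ n, |F n - c| ≤ (M - m) / 2 := by
    intro n
    rw [abs_le, hc]
    constructor <;> nlinarith [(hF n).1, (hF n).2]
  -- S : weighted absolute deviation of G
  set S : ℝ := ∑' n : ℕ, (1 - q) * q ^ n * |G n - EG| with hS
  have sS : Summable (fun n : ℕ => (1 - q) * q ^ n * |G n - EG|) := by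
    refine key _ ((1 - q) * (Kg + |EG|)) fun n => ?_
    have h2 : |G n - EG| ≤ Kg + |EG| := (abs_sub _ _).trans (add_le_add (hKg n) le_rfl)
    rw [abs_of_nonneg (mul_nonneg (mul_nonneg hp.le (hqn n)) (abs_nonneg _))]
    calc (1 - q) * q ^ n * |G n - EG| ≤ (1 - q) * q ^ n * (Kg + |EG|) :=
          mul_le_mul_of_nonneg_left h2 (mul_nonneg hp.le (hqn n))
      _ = (1 - q) * (Kg + |EG|) * q ^ n := by ring
  have hS0 : 0 ≤ S := tsum_nonneg fun n =>
    mul_nonneg (mul_nonneg hp.le (hqn n)) (abs_nonneg _)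
  -- |Cov| ≤ (M-m)/2 * S
  have hCovle : |(1 - q) * A - ((1 - q) * B) * EG| ≤ (M - m) / 2 * S := by
    rw [← hCov]
    have sBig : Summable (fun n : ℕ => (M - m) / 2 * ((1 - q) * q ^ n * |G n - EG|)) :=
      sS.mul_left _
    have hb : ∀ n : ℕ, ‖(1 - q) * q ^ n * (F n - c) * (G n - EG)‖
        ≤ (M - m) / 2 * ((1 - q) * q ^ n * |G n - EG|) := by
      intro n
      rw [Real.norm_eq_abs]
      have e : |(1 - q) * q ^ n * (F n - c) * (G n - EG)|
          = (1 - q) * q ^ n * |F n - c| * |G n - EG| := by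
        rw [abs_mul, abs_mul, abs_mul, abs_of_nonneg hp.le, abs_of_nonneg (hqn n)]
      rw [e]
      have := hFc n
      nlinarith [mul_nonneg (mul_nonneg hp.le (hqn n)) (abs_nonneg (G n - EG)),
        abs_nonneg (G n - EG), mul_nonneg hp.le (hqn n), abs_nonneg (F n - c)]
    have := tsum_of_norm_bounded sBig.hasSum hb
    rw [Real.norm_eq_abs] at this
    calc |∑' n : ℕ, (1 - q) * q ^ n * (F n - c) * (G n - EG)|
        ≤ ∑' n : ℕ, (M - m) / 2 * ((1 - q) * q ^ n * |G n - EG|) := this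
      _ = (M - m) / 2 * S := by rw [tsum_mul_left]
  -- chord bound : (Φ - φ) * S ≤ 2 (Φ - EG)(EG - φ)
  have hChord : (Φ - φ) * S ≤ 2 * (Φ - EG) * (EG - φ) := by
    have hterm : ∀ n : ℕ, (Φ - φ) * ((1 - q) * q ^ n * |G n - EG|)
        ≤ ((1 - q) * ((Φ - EG) - (EG - φ))) * (G n * q ^ n)
          + ((1 - q) * (Φ * (EG - φ) - φ * (Φ - EG))) * q ^ n := by
      intro n
      rcases abs_cases (G n - EG) with ⟨h1, h2⟩ | ⟨h1, h2⟩ <;> rw [h1]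
      · nlinarith [mul_nonneg (mul_nonneg hp.le (hqn n))
          (mul_nonneg (sub_nonneg.2 (hG n).2) (sub_nonneg.2 hEGlb))]
      · nlinarith [mul_nonneg (mul_nonneg hp.le (hqn n))
          (mul_nonneg (sub_nonneg.2 (hG n).1) (sub_nonneg.2 hEGub))]
    have hsum : (∑' n : ℕ, (Φ - φ) * ((1 - q) * q ^ n * |G n - EG|))
        ≤ ∑' n : ℕ, (((1 - q) * ((Φ - EG) - (EG - φ))) * (G n * q ^ n)
          + ((1 - q) * (Φ * (EG - φ) - φ * (Φ - EG))) * q ^ n) :=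
      Summable.tsum_le_tsum hterm (sS.mul_left _) ((sG.mul_left _).add (hsq.mul_left _))
    rw [tsum_mul_left, Summable.tsum_add (sG.mul_left _) (hsq.mul_left _),
      tsum_mul_left, tsum_mul_left, htq] at hsum
    calc (Φ - φ) * S ≤ ((1 - q) * ((Φ - EG) - (EG - φ))) * Cs
          + ((1 - q) * (Φ * (EG - φ) - φ * (Φ - EG))) * (1 - q)⁻¹ := hsum
      _ = 2 * (Φ - EG) * (EG - φ) := by rw [hEG]; field_simp; ring
  -- finish
  clear_value Kf Kg A B Cs EG c S
  rcases eq_or_lt_of_le hφΦ with heq | hlt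
  · -- φ = Φ : G is constant, S = 0
    have hGc : ∀ n, G n = φ := fun n => le_antisymm (heq ▸ (hG n).2) (hG n).1
    have hEGφ : EG = φ := by
      rw [hEG, hCs]
      have e : (fun n : ℕ => G n * q ^ n) = fun n : ℕ => φ * q ^ n :=
        funext fun n => by rw [hGc n]
      rw [e, tsum_mul_left, htq]
      field_simp
    have hSz : S = 0 := by
      rw [hS]
      have e : (fun n : ℕ => (1 - q) * q ^ n * |G n - EG|) = fun _ : ℕ => (0:ℝ) :=
        funext fun n => by rw [hGc n, hEGφ, sub_self, abs_zero, mul_zero]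
      rw [e, tsum_zero]
    have h0 : (M - m) / 2 * S = 0 := by rw [hSz, mul_zero]
    refine le_trans hCovle ?_
    rw [h0, ← heq]
    nlinarith [hmM]
  · -- φ < Φ
    have hSle : S ≤ (Φ - φ) / 2 := by
      nlinarith [hChord, sq_nonneg (Φ + φ - 2 * EG), hlt]
    refine le_trans hCovle ?_
    nlinarith [hS0, hmM, hSle, hlt]

/-- q-Grüss inequality for the Jackson q-integral over `[0,b]`. -/
theorem q_gruss_Iq0b (q b m M φ Φ : ℝ) (f g : ℝ → ℝ)
    (hq0 : 0 < q) (hq1 : q < 1) (hb : 0 < b)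
    (hf : ∀ x ∈ Icc (0:ℝ) b, m ≤ f x ∧ f x ≤ M)
    (hg : ∀ x ∈ Icc (0:ℝ) b, φ ≤ g x ∧ g x ≤ Φ) :
    |(1 / b) * (b * (1 - q) * ∑' n : ℕ, f (b * q ^ n) * g (b * q ^ n) * q ^ n) -
        (1 / b ^ 2) * (b * (1 - q) * ∑' n : ℕ, f (b * q ^ n) * q ^ n) *
          (b * (1 - q) * ∑' n : ℕ, g (b * q ^ n) * q ^ n)| ≤
      (1 / 4) * (M - m) * (Φ - φ) := by
  have hmem : ∀ n : ℕ, b * q ^ n ∈ Icc (0:ℝ) b := by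
    intro n
    constructor
    · positivity
    · nlinarith [(pow_le_one₀ hq0.le hq1.le : q ^ n ≤ 1), hb]
  have h := gruss_aux q hq0 hq1 (fun n => f (b * q ^ n)) (fun n => g (b * q ^ n)) m M φ Φ
    (fun n => hf _ (hmem n)) (fun n => hg _ (hmem n))
  have hb' : b ≠ 0 := hb.ne'
  have e : (1 / b) * (b * (1 - q) * ∑' n : ℕ, f (b * q ^ n) * g (b * q ^ n) * q ^ n) -
      (1 / b ^ 2) * (b * (1 - q) * ∑' n : ℕ, f (b * q ^ n) * q ^ n) *
        (b * (1 - q) * ∑' n : ℕ, g (b * q ^ n) * q ^ n)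
      = (1 - q) * (∑' n : ℕ, f (b * q ^ n) * g (b * q ^ n) * q ^ n) -
        ((1 - q) * ∑' n : ℕ, f (b * q ^ n) * q ^ n) *
          ((1 - q) * ∑' n : ℕ, g (b * q ^ n) * q ^ n) := by
    field_simp
  rw [e]
  exact h
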